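/- Under the setup of the previous identity, assume additionally that V_G(α) has rank d - 1 (full rank over span(X)). Then the inverse of V_H(α) is given by V_H(α)^{-1} = (1/(1-α_{x̂}))·(V_G(α)^+ + V_G(α)^+ μ_G(α) x̂^⊤ + x̂ μ_G(α)^⊤ V_G(α)^+ + (‖μ_G(α)‖²_{V_G(α)^+} + 1/α_{x̂})·x̂ x̂^⊤), where V_G(α)^+ is the Moore–Penrose pseudo-inverse. In particular, ‖x̂ - μ_G(α)‖²_{V_H(α)^{-1}} = 1/((1-α_{x̂})·α_{x̂}). -/

import Mathlib

open Finset Matrix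

set_option linter.unusedSectionVars false

section Aux
variable {n : Type*} [Fintype n]

lemma mulVmv (A : Matrix n n ℝ) (u v : n → ℝ) :
    A * vecMulVec u v = vecMulVec (A *ᵥ u) v := by
  ext i j
  simp only [Matrix.mul_apply, vecMulVec_apply, Matrix.mulVec, dotProduct]
  rw [Finset.sum_mul]
  exact Finset.sum_congr rfl fun _ _ => by ring

lemma vmvMul (A : Matrix n n ℝ) (u v : n → ℝ) :
    vecMulVec u v * A = vecMulVec u (v ᵥ* A) := by
  ext i j
  simp only [Matrix.mul_apply, vecMulVec_apply, Matrix.vecMul, dotProduct]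
  rw [Finset.mul_sum]
  exact Finset.sum_congr rfl fun _ _ => by ring

lemma vmvMulVmv (u v u' v' : n → ℝ) :
    vecMulVec u v * vecMulVec u' v' = (v ⬝ᵥ u') • vecMulVec u v' := by
  ext i j
  simp only [Matrix.mul_apply, vecMulVec_apply, Matrix.smul_apply, smul_eq_mul, dotProduct]
  rw [Finset.sum_mul]
  exact Finset.sum_congr rfl fun _ _ => by ring

lemma vmvMulVec (u v w : n → ℝ) : vecMulVec u v *ᵥ w = (v ⬝ᵥ w) • u := by
  ext i
  simp only [Matrix.mulVec, vecMulVec_apply, dotProduct, Pi.smul_apply, smul_eq_mul]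
  rw [Finset.sum_mul]
  exact Finset.sum_congr rfl fun _ _ => by ring

lemma vmvT (u v : n → ℝ) : (vecMulVec u v)ᵀ = vecMulVec v u := by
  ext i j; simp [vecMulVec_apply, mul_comm]

lemma vmvSubLeft (u u' v : n → ℝ) :
    vecMulVec (u - u') v = vecMulVec u v - vecMulVec u' v := by
  ext i j; simp [vecMulVec_apply, sub_mul]

lemma vmvZeroLeft (v : n → ℝ) : vecMulVec (0 : n → ℝ) v = 0 := by
  ext i j; simp [vecMulVec_apply]

lemma vmvNegRight (u v : n → ℝ) : vecMulVec u (-v) = -vecMulVec u v := by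
  ext i j; simp [vecMulVec_apply]

lemma mpUnique (A P1 P2 : Matrix n n ℝ)
    (h11 : A * P1 * A = A) (h12 : P1 * A * P1 = P1)
    (h13 : (A * P1)ᵀ = A * P1) (h14 : (P1 * A)ᵀ = P1 * A)
    (h21 : A * P2 * A = A) (h22 : P2 * A * P2 = P2)
    (h23 : (A * P2)ᵀ = A * P2) (h24 : (P2 * A)ᵀ = P2 * A) :
    P1 = P2 := by
  have hA1 : A * P1 = A * P2 := by
    calc A * P1 = (A * P1)ᵀ := h13.symm
      _ = ((A * P2 * A) * P1)ᵀ := by rw [h21]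
      _ = ((A * P2) * (A * P1))ᵀ := by simp only [mul_assoc]
      _ = (A * P1)ᵀ * (A * P2)ᵀ := by rw [transpose_mul]
      _ = (A * P1) * (A * P2) := by rw [h13, h23]
      _ = (A * P1 * A) * P2 := by simp only [mul_assoc]
      _ = A * P2 := by rw [h11]
  have hA2 : P1 * A = P2 * A := by
    calc P1 * A = (P1 * A)ᵀ := h14.symm
      _ = (P1 * (A * P2 * A))ᵀ := by rw [h21]
      _ = ((P1 * A) * (P2 * A))ᵀ := by simp only [mul_assoc]
      _ = (P2 * A)ᵀ * (P1 * A)ᵀ := by rw [transpose_mul]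
      _ = (P2 * A) * (P1 * A) := by rw [h14, h24]
      _ = P2 * (A * P1 * A) := by simp only [mul_assoc]
      _ = P2 * A := by rw [h11]
  calc P1 = P1 * A * P1 := h12.symm
    _ = P1 * (A * P2) := by rw [mul_assoc, hA1]
    _ = (P2 * A) * P2 := by rw [← mul_assoc, hA2]
    _ = P2 := h22

end Aux

/-- Inverse formula for `V_H(α)` (second part of Lemma "logdet lemma 1"),
together with the norm identity `‖x̂ - μ_G‖²_{V_H⁻¹} = 1/((1-a)a)`. -/
theorem variance_inverse_formula {d : ℕ} {ι : Type*} [Fintype ι]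
    (x : ι → Fin (d+1) → ℝ) (w : ι → ℝ) (a : ℝ)
    (hw : ∀ i, 0 ≤ w i) (ha0 : 0 < a) (ha1 : a < 1)
    (hsum : ∑ i, w i = 1 - a)
    (xhat : Fin (d+1) → ℝ) (hxhat : xhat = fun k => if k = Fin.last d then 1 else 0)
    (hperp : ∀ i, dotProduct (x i) xhat = 0)
    (μG : Fin (d+1) → ℝ) (hμG : μG = ∑ i, (w i / (1 - a)) • x i)
    (G : Matrix (Fin (d+1)) (Fin (d+1)) ℝ)
    (hG : G = ∑ i, (w i / (1 - a)) • Matrix.vecMulVec (x i) (x i))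
    (μH : Fin (d+1) → ℝ) (hμH : μH = a • xhat + ∑ i, w i • x i)
    (H : Matrix (Fin (d+1)) (Fin (d+1)) ℝ)
    (hH : H = a • Matrix.vecMulVec xhat xhat + ∑ i, w i • Matrix.vecMulVec (x i) (x i))
    (VG VH : Matrix (Fin (d+1)) (Fin (d+1)) ℝ)
    (hVG : VG = G - Matrix.vecMulVec μG μG)
    (hVH : VH = H - Matrix.vecMulVec μH μH)
    -- `VGp` is the Moore–Penrose pseudo-inverse of `VG`; the rank-(d-1)
    -- assumption gives exactly the following identities:
    (VGp : Matrix (Fin (d+1)) (Fin (d+1)) ℝ)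
    (hMP1 : VG * VGp * VG = VG) (hMP2 : VGp * VG * VGp = VGp)
    (hMP3 : (VG * VGp)ᵀ = VG * VGp) (hMP4 : (VGp * VG)ᵀ = VGp * VG)
    (hrank : VG * VGp = 1 - Matrix.vecMulVec xhat xhat)
    (hVGx : VG.mulVec xhat = 0) (hVGpx : VGp.mulVec xhat = 0)
    (W : Matrix (Fin (d+1)) (Fin (d+1)) ℝ)
    (hW : W = (1 / (1 - a)) •
      (VGp + Matrix.vecMulVec (VGp.mulVec μG) xhat
        + Matrix.vecMulVec xhat (Matrix.vecMul μG VGp)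
        + (dotProduct μG (VGp.mulVec μG) + 1 / a) • Matrix.vecMulVec xhat xhat)) :
    VH * W = 1 ∧ W * VH = 1 ∧
      dotProduct (xhat - μG) (W.mulVec (xhat - μG)) = 1 / ((1 - a) * a) := by
  have hb : (1 : ℝ) - a ≠ 0 := by linarith
  have hane : a ≠ 0 := ne_of_gt ha0
  -- basic dot products
  have hxx : xhat ⬝ᵥ xhat = 1 := by
    rw [hxhat]
    simp [dotProduct]
  have hμx : μG ⬝ᵥ xhat = 0 := by
    rw [hμG]
    simp only [dotProduct, Finset.sum_apply, Pi.smul_apply, smul_eq_mul, Finset.sum_mul]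
    rw [Finset.sum_comm]
    refine Finset.sum_eq_zero fun i _ => ?_
    have hp := hperp i
    simp only [dotProduct] at hp
    calc ∑ k, w i / (1 - a) * x i k * xhat k
        = (w i / (1 - a)) * ∑ k, x i k * xhat k := by
          rw [Finset.mul_sum]; exact Finset.sum_congr rfl fun _ _ => by ring
      _ = 0 := by rw [hp, mul_zero]
  have hxμ : xhat ⬝ᵥ μG = 0 := by rw [dotProduct_comm]; exact hμx
  -- symmetry of VG and VGp
  have hGT : Gᵀ = G := by
    rw [hG, Matrix.transpose_sum]
    exact Finset.sum_congr rfl fun i _ => by rw [Matrix.transpose_smul, vmvT]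
  have hVGT : VGᵀ = VG := by rw [hVG, Matrix.transpose_sub, hGT, vmvT]
  have hPTVG : VGpᵀ * VG = VG * VGp := by
    conv_lhs => rw [← hVGT]
    rw [← transpose_mul, hMP3]
  have hVGPT : VG * VGpᵀ = VGp * VG := by
    conv_lhs => rw [← hVGT]
    rw [← transpose_mul, hMP4]
  have hPsym : VGpᵀ = VGp := by
    apply mpUnique VG VGpᵀ VGp _ _ _ _ hMP1 hMP2 hMP3 hMP4
    · have h := congrArg Matrix.transpose hMP1
      rw [transpose_mul, transpose_mul, hVGT] at h
      rw [mul_assoc]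
      exact h
    · have h := congrArg Matrix.transpose hMP2
      rw [transpose_mul, transpose_mul, hVGT] at h
      rw [mul_assoc]
      exact h
    · rw [hVGPT]; exact hMP4
    · rw [hPTVG]; exact hMP3
  have hPVG : VGp * VG = 1 - vecMulVec xhat xhat := by
    rw [← hPsym, hPTVG, hrank]
  -- u, s abbreviations
  set u := VGp *ᵥ μG with hu
  have hμP : μG ᵥ* VGp = u := by rw [← hPsym, vecMul_transpose]
  have hxP : xhat ᵥ* VGp = 0 := by rw [← hPsym, vecMul_transpose, hVGpx]
  rw [hμP] at hW
  set s := μG ⬝ᵥ u with hs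
  have hVGu : VG *ᵥ u = μG := by
    rw [hu, Matrix.mulVec_mulVec, hrank, Matrix.sub_mulVec, Matrix.one_mulVec,
      vmvMulVec, hxμ]
    simp
  have hxu : xhat ⬝ᵥ u = 0 := by
    rw [hu, Matrix.dotProduct_mulVec, hxP, zero_dotProduct]
  -- the difference vector
  set v := xhat - μG with hv
  have hxv : xhat ⬝ᵥ v = 1 := by rw [hv, dotProduct_sub, hxx, hxμ, sub_zero]
  have hvx : v ⬝ᵥ xhat = 1 := by rw [dotProduct_comm]; exact hxv
  have hvu : v ⬝ᵥ u = -s := by rw [hv, sub_dotProduct, hxu, hs, zero_sub]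
  have huv : u ⬝ᵥ v = -s := by rw [dotProduct_comm]; exact hvu
  have hvP : v ᵥ* VGp = -u := by
    rw [hv, Matrix.sub_vecMul, hxP, hμP, zero_sub]
  have hPv : VGp *ᵥ v = -u := by
    rw [hv, Matrix.mulVec_sub, hVGpx, hu, zero_sub]
  -- decomposition of VH
  have hS2 : ∑ i, w i • x i = (1 - a) • μG := by
    rw [hμG, Finset.smul_sum]
    refine Finset.sum_congr rfl fun i _ => ?_
    rw [smul_smul]
    congr 1
    field_simp
  have hS1 : ∑ i, w i • Matrix.vecMulVec (x i) (x i) = (1 - a) • G := by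
    rw [hG, Finset.smul_sum]
    refine Finset.sum_congr rfl fun i _ => ?_
    rw [smul_smul]
    congr 1
    field_simp
  have hVH' : VH = (1 - a) • VG + (a * (1 - a)) • vecMulVec v v := by
    rw [hVH, hH, hS1, hμH, hS2, hVG, hv]
    ext i j
    simp only [Matrix.add_apply, Matrix.sub_apply, Matrix.smul_apply, vecMulVec_apply,
      Pi.add_apply, Pi.smul_apply, Pi.sub_apply, smul_eq_mul]
    ring
  -- the core matrix K
  set K := VGp + vecMulVec u xhat + vecMulVec xhat u + (s + 1 / a) • vecMulVec xhat xhat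
    with hKdef
  have hVGK : VG * K = 1 - vecMulVec xhat xhat + vecMulVec μG xhat := by
    rw [hKdef, Matrix.mul_add, Matrix.mul_add, Matrix.mul_add, Matrix.mul_smul,
      hrank, mulVmv, mulVmv, hVGu, hVGx, vmvZeroLeft]
    rw [mulVmv, hVGx, vmvZeroLeft]
    simp
  have hvvK : vecMulVec v v * K = (1 / a) • vecMulVec v xhat := by
    rw [hKdef, Matrix.mul_add, Matrix.mul_add, Matrix.mul_add, Matrix.mul_smul,
      vmvMul, hvP, vmvNegRight, vmvMulVmv, vmvMulVmv, vmvMulVmv, hvu, hvx]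
    module
  have hVHW : VH * W = 1 := by
    rw [hVH', hW, Matrix.add_mul, Matrix.smul_mul, Matrix.smul_mul, Matrix.mul_smul,
      Matrix.mul_smul, hVGK, hvvK, hv, vmvSubLeft]
    match_scalars <;> (field_simp; try ring)
  refine ⟨hVHW, ?_, ?_⟩
  · -- W * VH = 1 by symmetry
    have hWT : Wᵀ = W := by
      rw [hW, Matrix.transpose_smul, hKdef, Matrix.transpose_add, Matrix.transpose_add,
        Matrix.transpose_add, hPsym, vmvT, vmvT, Matrix.transpose_smul, vmvT]
      congr 1
      abel
    have hVHT : VHᵀ = VH := by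
      rw [hVH', Matrix.transpose_add, Matrix.transpose_smul, Matrix.transpose_smul,
        hVGT, vmvT]
    calc W * VH = (VHᵀ * Wᵀ)ᵀ := by rw [← transpose_mul, transpose_transpose]
      _ = (VH * W)ᵀ := by rw [hVHT, hWT]
      _ = 1 := by rw [hVHW, transpose_one]
  · -- the norm identity
    have hKv : K *ᵥ v = (1 / a) • xhat := by
      rw [hKdef, Matrix.add_mulVec, Matrix.add_mulVec, Matrix.add_mulVec,
        Matrix.smul_mulVec, vmvMulVec, vmvMulVec, vmvMulVec, hPv, hxv, huv]
      module
    rw [hW, Matrix.smul_mulVec, hKv]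
    rw [dotProduct_smul, dotProduct_smul, hvx]
    simp only [smul_eq_mul, mul_one]
    field_simp
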